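/- Suppose 𝓕 = ⟨F_0, …, F_k⟩ is 𝓟-sharp in U, where 𝓟 = ⟨P_0, …, P_k⟩. Let 0 ≤ j ≤ k and let C_0, …, C_{m−1} be pairwise disjoint subsets of P_j, each closed in the subspace P_j. Then there is at most one index l < m for which there is no open set U' ⊆ U such that 𝓕 is (𝓟 ∖ C_l)-sharp in U'. -/

import Mathlib

open Set Topology

/-- A set is `Σ⁰₂` (Fσ) if it is a countable union of closed sets. -/
def IsFsigma {X : Type*} [TopologicalSpace X] (A : Set X) : Prop :=
  ∃ F : ℕ → Set X, (∀ n, IsClosed (F n)) ∧ A = ⋃ n, F n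

/-- A set is `Σ⁰₃` if it is a countable union of Gδ sets. -/
def IsSigma03 {X : Type*} [TopologicalSpace X] (A : Set X) : Prop :=
  ∃ G : ℕ → Set X, (∀ n, IsGδ (G n)) ∧ A = ⋃ n, G n

/-- A set is `Δ⁰₃` if both it and its complement are `Σ⁰₃`. -/
def IsDelta03 {X : Type*} [TopologicalSpace X] (A : Set X) : Prop :=
  IsSigma03 A ∧ IsSigma03 Aᶜ

/-- `Σ⁰₂`-measurable function: preimages of open sets are Fσ. -/
def Sigma2Measurable {X Y : Type*} [TopologicalSpace X] [TopologicalSpace Y]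
    (f : X → Y) : Prop :=
  ∀ U : Set Y, IsOpen U → IsFsigma (f ⁻¹' U)

/-- `Σ⁰₃`-measurable function: preimages of open sets are `Σ⁰₃`. -/
def Sigma3Measurable {X Y : Type*} [TopologicalSpace X] [TopologicalSpace Y]
    (f : X → Y) : Prop :=
  ∀ U : Set Y, IsOpen U → IsSigma03 (f ⁻¹' U)

/-- `f ∈ dec(Σ⁰₂, Δ⁰₃)`: there is a countable partition of the domain into `Δ⁰₃` pieces
on each of which `f` restricts (with the subspace topology) to a `Σ⁰₂`-measurable function. -/
def DecSigma2 {X Y : Type*} [TopologicalSpace X] [TopologicalSpace Y]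
    (f : X → Y) : Prop :=
  ∃ A : ℕ → Set X, (∀ m n, m ≠ n → Disjoint (A m) (A n)) ∧ (⋃ n, A n) = Set.univ ∧
    (∀ n, IsDelta03 (A n)) ∧ ∀ n, Sigma2Measurable ((A n).restrict f)

/-- `f ∈ dec(Σ⁰₁, Δ⁰₃)`: there is a countable partition of the domain into `Δ⁰₃` pieces
on each of which `f` restricts (with the subspace topology) to a continuous function. -/
def DecCont {X Y : Type*} [TopologicalSpace X] [TopologicalSpace Y]
    (f : X → Y) : Prop :=
  ∃ A : ℕ → Set X, (∀ m n, m ≠ n → Disjoint (A m) (A n)) ∧ (⋃ n, A n) = Set.univ ∧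
    (∀ n, IsDelta03 (A n)) ∧ ∀ n, Continuous ((A n).restrict f)

/-- `⟨F₀⟩` is `⟨P₀⟩`-sharp in `U` (base case of the sharpness notion for `dec(Σ⁰₁, Δ⁰₃)`). -/
def SharpP0 {X Y : Type*} [TopologicalSpace X] [TopologicalSpace Y]
    (f : X → Y) (P0 : Set Y) (F0 U : Set X) : Prop :=
  (U ∩ F0).Nonempty ∧ ∀ U' : Set X, IsOpen U' → U' ⊆ U → (U' ∩ F0).Nonempty →
    ¬ DecCont ((f ⁻¹' P0 ∩ F0 ∩ U').restrict f)

/-- `⟨F 0, …, F k⟩` is `⟨P 0, …, P k⟩`-sharp in `U`. -/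
def SharpP {X Y : Type*} [TopologicalSpace X] [TopologicalSpace Y]
    (f : X → Y) (P : ℕ → Set Y) (F : ℕ → Set X) : ℕ → Set X → Prop
  | 0, U => SharpP0 f (P 0) (F 0) U
  | (k+1), U => SharpP0 f (P (k+1)) (F (k+1)) U ∧
      ∀ U' : Set X, IsOpen U' → U' ⊆ U → (U' ∩ F (k+1)).Nonempty →
        ∃ U'' : Set X, IsOpen U'' ∧ U'' ⊆ U' ∧ SharpP f P F k U''


section AuxTools
variable {X Y Z : Type*} [TopologicalSpace X] [TopologicalSpace Y] [TopologicalSpace Z]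

theorem auxIsGδ.preimage {G : Set X} (h : IsGδ G) {g : Z → X} (hg : Continuous g) :
    IsGδ (g ⁻¹' G) := by
  obtain ⟨U, hU, rfl⟩ := h.eq_iInter_nat
  rw [preimage_iInter]
  exact IsGδ.iInter fun n => ((hU n).preimage hg).isGδ

theorem auxSigma03.preimage {A : Set X} (h : IsSigma03 A) {g : Z → X} (hg : Continuous g) :
    IsSigma03 (g ⁻¹' A) := by
  obtain ⟨G, hG, rfl⟩ := h
  exact ⟨fun n => g ⁻¹' G n, fun n => auxIsGδ.preimage (hG n) hg, by rw [preimage_iUnion]⟩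

theorem auxSigma03.empty : IsSigma03 (∅ : Set X) :=
  ⟨fun _ => ∅, fun _ => isOpen_empty.isGδ, by simp⟩

theorem auxSigma03.of_isGδ {A : Set X} (h : IsGδ A) : IsSigma03 A :=
  ⟨fun _ => A, fun _ => h, (iUnion_const A).symm⟩

theorem auxSigma03.iUnion {A : ℕ → Set X} (h : ∀ n, IsSigma03 (A n)) :
    IsSigma03 (⋃ n, A n) := by
  choose G hG hGA using h
  refine ⟨fun i => G (Nat.pairEquiv.symm i).1 (Nat.pairEquiv.symm i).2,
    fun i => hG _ _, ?_⟩
  ext x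
  simp only [mem_iUnion, hGA]
  constructor
  · rintro ⟨n, m, hx⟩
    exact ⟨Nat.pairEquiv (n, m), by simpa using hx⟩
  · rintro ⟨i, hx⟩
    exact ⟨_, _, hx⟩

theorem auxSigma03.inter {A B : Set X} (hA : IsSigma03 A) (hB : IsSigma03 B) :
    IsSigma03 (A ∩ B) := by
  obtain ⟨G, hG, rfl⟩ := hA
  obtain ⟨H, hH, rfl⟩ := hB
  refine ⟨fun i => G (Nat.pairEquiv.symm i).1 ∩ H (Nat.pairEquiv.symm i).2,
    fun i => (hG _).inter (hH _), ?_⟩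
  ext x
  simp only [mem_inter_iff, mem_iUnion]
  constructor
  · rintro ⟨⟨n, hn⟩, ⟨m, hm⟩⟩
    exact ⟨Nat.pairEquiv (n, m), by simpa using ⟨hn, hm⟩⟩
  · rintro ⟨i, hx, hx'⟩
    exact ⟨⟨_, hx⟩, ⟨_, hx'⟩⟩

theorem auxSigma03.compl_gdelta [PolishSpace X] {G : Set X} (h : IsGδ G) :
    IsSigma03 Gᶜ := by
  letI := TopologicalSpace.upgradeIsCompletelyMetrizable X
  obtain ⟨U, hU, rfl⟩ := h.eq_iInter_nat
  rw [compl_iInter]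
  exact ⟨fun n => (U n)ᶜ, fun n => (hU n).isClosed_compl.isGδ, rfl⟩

theorem auxSigma03.gdelta_diff [PolishSpace X] {A B : Set X} (hA : IsGδ A) (hB : IsGδ B) :
    IsSigma03 (A \ B) :=
  auxSigma03.inter (auxSigma03.of_isGδ hA) (auxSigma03.compl_gdelta hB)


end AuxTools

section AuxSub
variable {X Y : Type*} [TopologicalSpace X] [TopologicalSpace Y] {S T : Set X} {f : X → Y}

/-- Lift a Gδ set in a subspace to a Gδ set of the ambient space. -/
theorem auxIsGδ.lift {t : Set ↥S} (h : IsGδ t) :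
    ∃ G : Set X, IsGδ G ∧ Subtype.val ⁻¹' G = t := by
  obtain ⟨U, hU, rfl⟩ := h.eq_iInter_nat
  have : ∀ n, ∃ V : Set X, IsOpen V ∧ Subtype.val ⁻¹' V = U n := by
    intro n
    rw [← isOpen_induced_iff]
    exact hU n
  choose V hV hVU using this
  exact ⟨⋂ n, V n, IsGδ.iInter fun n => (hV n).isGδ, by simp [preimage_iInter, hVU]⟩

/-- Lift a Σ⁰₃ set in a subspace to a Σ⁰₃ set of the ambient space. -/
theorem auxSigma03.lift {t : Set ↥S} (h : IsSigma03 t) :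
    ∃ B : Set X, IsSigma03 B ∧ Subtype.val ⁻¹' B = t := by
  obtain ⟨G, hG, rfl⟩ := h
  choose B hB hBG using fun n => auxIsGδ.lift (hG n)
  exact ⟨⋃ n, B n, auxSigma03.iUnion fun n => auxSigma03.of_isGδ (hB n), by simp [preimage_iUnion, hBG]⟩

theorem auxCont.mono (hTS : T ⊆ S) (h : Continuous (S.restrict f)) :
    Continuous (T.restrict f) :=
  h.comp (continuous_inclusion hTS)

/-- From continuity on `T ⊆ S` as a subspace of `X` to continuity on the preimage in `↥S`. -/
theorem auxCont.nest (hTS : T ⊆ S) (h : Continuous (T.restrict f)) :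
    Continuous ((Subtype.val ⁻¹' T : Set ↥S).restrict (S.restrict f)) := by
  have : ((Subtype.val ⁻¹' T : Set ↥S).restrict (S.restrict f)) =
      (T.restrict f) ∘ (fun x : ↥(Subtype.val ⁻¹' T : Set ↥S) => (⟨x.1.1, x.2⟩ : ↥T)) := rfl
  rw [this]
  exact h.comp (Continuous.subtype_mk (continuous_subtype_val.comp continuous_subtype_val) _)

/-- From continuity on a subset of the subspace `↥S` to continuity on its image in `X`. -/
theorem auxCont.unnest {t : Set ↥S} (h : Continuous (t.restrict (S.restrict f))) :
    Continuous ((Subtype.val '' t).restrict f) := by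
  have hmem : ∀ x : ↥(Subtype.val '' t), x.1 ∈ S := by
    rintro ⟨x, y, hy, rfl⟩; exact y.2
  have hmem2 : ∀ x : ↥(Subtype.val '' t), (⟨x.1, hmem x⟩ : ↥S) ∈ t := by
    rintro ⟨x, y, hy, rfl⟩; exact hy
  have : ((Subtype.val '' t).restrict f) =
      (t.restrict (S.restrict f)) ∘ (fun x => ⟨⟨x.1, hmem x⟩, hmem2 x⟩) := rfl
  rw [this]
  exact h.comp ((continuous_subtype_val.subtype_mk _).subtype_mk _)

/-- Build a `DecCont` witness for `S.restrict f` from countably many ambient Σ⁰₃ "codes". -/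
theorem auxDecCont.ofCodes (B : ℕ → Set X) (hB : ∀ n, IsSigma03 (B n))
    (hdisj : ∀ m n, m ≠ n → ∀ x ∈ S, x ∈ B m → x ∈ B n → False)
    (hcov : S ⊆ ⋃ n, B n)
    (hcont : ∀ n, Continuous ((S ∩ B n).restrict f)) : DecCont (S.restrict f) := by
  refine ⟨fun n => (Subtype.val ⁻¹' B n : Set ↥S), ?_, ?_, ?_, ?_⟩
  · intro m n hmn
    exact Set.disjoint_left.mpr fun x h1 h2 => hdisj m n hmn x.1 x.2 h1 h2
  · ext x
    simpa [mem_iUnion] using mem_iUnion.mp (hcov x.2)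
  · intro n
    constructor
    · exact auxSigma03.preimage (hB n) continuous_subtype_val
    · have : (Subtype.val ⁻¹' B n : Set ↥S)ᶜ =
          Subtype.val ⁻¹' (⋃ m, if m = n then ∅ else B m) := by
        ext x
        simp only [mem_compl_iff, mem_preimage, mem_iUnion]
        constructor
        · intro hx
          obtain ⟨m, hm⟩ := mem_iUnion.mp (hcov x.2)
          have hmn : m ≠ n := fun h => hx (h ▸ hm)
          exact ⟨m, by simp [hmn, hm]⟩
        · rintro ⟨m, hm⟩ hx
          by_cases h : m = n
          · simp [h] at hm
          · simp only [if_neg h] at hm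
            exact hdisj m n h x.1 x.2 hm hx
      rw [this]
      refine auxSigma03.preimage (auxSigma03.iUnion fun m => ?_) continuous_subtype_val
      by_cases h : m = n <;> simp [h, auxSigma03.empty, hB m]
  · intro n
    show Continuous ((Subtype.val ⁻¹' B n : Set ↥S).restrict (S.restrict f))
    have he : (Subtype.val ⁻¹' B n : Set ↥S) = Subtype.val ⁻¹' (S ∩ B n) := by
      ext x; simp [x.2]
    rw [he]
    exact auxCont.nest inter_subset_left (hcont n)

/-- Extract ambient Σ⁰₃ codes from a `DecCont` witness. -/
theorem auxDecCont.codes (h : DecCont (S.restrict f)) :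
    ∃ B : ℕ → Set X, (∀ n, IsSigma03 (B n)) ∧
      (∀ m n, m ≠ n → ∀ x ∈ S, x ∈ B m → x ∈ B n → False) ∧
      (S ⊆ ⋃ n, B n) ∧ ∀ n, Continuous ((S ∩ B n).restrict f) := by
  obtain ⟨A, hdisj, hcov, hdelta, hcont⟩ := h
  choose B hB hBA using fun n => auxSigma03.lift (hdelta n).1
  have hmem : ∀ n (x : X) (hx : x ∈ S), x ∈ B n ↔ (⟨x, hx⟩ : ↥S) ∈ A n := by
    intro n x hx
    rw [← hBA n]; rfl
  refine ⟨B, hB, ?_, ?_, ?_⟩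
  · intro m n hmn x hx h1 h2
    exact Set.disjoint_left.mp (hdisj m n hmn) ((hmem m x hx).mp h1) ((hmem n x hx).mp h2)
  · intro x hx
    have : (⟨x, hx⟩ : ↥S) ∈ ⋃ n, A n := hcov ▸ mem_univ _
    obtain ⟨n, hn⟩ := mem_iUnion.mp this
    exact mem_iUnion.mpr ⟨n, (hmem n x hx).mpr hn⟩
  · intro n
    have him : S ∩ B n = Subtype.val '' (A n) := by
      ext x
      constructor
      · rintro ⟨hx, hb⟩
        exact ⟨⟨x, hx⟩, (hmem n x hx).mp hb, rfl⟩
      · rintro ⟨y, hy, rfl⟩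
        exact ⟨y.2, (hmem n y.1 y.2).mpr hy⟩
    rw [him]
    exact auxCont.unnest (hcont n)

theorem auxDecCont.mono (hTS : T ⊆ S) (h : DecCont (S.restrict f)) :
    DecCont (T.restrict f) := by
  obtain ⟨B, hB, hdisj, hcov, hcont⟩ := auxDecCont.codes h
  exact auxDecCont.ofCodes B hB (fun m n hmn x hx => hdisj m n hmn x (hTS hx))
    (fun x hx => hcov (hTS hx))
    (fun n => auxCont.mono (inter_subset_inter_left _ hTS) (hcont n))

end AuxSub

section AuxGlue
variable {X Y : Type*} [TopologicalSpace X] [PolishSpace X] [TopologicalSpace Y] {f : X → Y}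

theorem auxDecCont.glue (hf : Sigma3Measurable f) {S : Set X} {V₁ V₂ : Set Y}
    (hV₁ : IsOpen V₁) (hV₂ : IsOpen V₂) (hS : S ⊆ f ⁻¹' V₁ ∪ f ⁻¹' V₂)
    (h₁ : DecCont ((S ∩ f ⁻¹' V₁).restrict f))
    (h₂ : DecCont ((S ∩ f ⁻¹' V₂).restrict f)) :
    DecCont (S.restrict f) := by
  obtain ⟨G₁, hG₁, hG₁eq⟩ := hf V₁ hV₁
  obtain ⟨G₂, hG₂, hG₂eq⟩ := hf V₂ hV₂
  obtain ⟨B₁, hB₁, hd₁, hc₁, hk₁⟩ := auxDecCont.codes h₁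
  obtain ⟨B₂, hB₂, hd₂, hc₂, hk₂⟩ := auxDecCont.codes h₂
  set T : ℕ → Set X := fun n => if Even n then G₁ (n / 2) else G₂ (n / 2) with hT
  have hTgd : ∀ n, IsGδ (T n) := by
    intro n; rw [hT]; dsimp only; split <;> [exact hG₁ _; exact hG₂ _]
  have hTV₁ : ∀ n, Even n → T n ⊆ f ⁻¹' V₁ := by
    intro n hn
    rw [hT]; dsimp only; rw [if_pos hn, hG₁eq]
    exact subset_iUnion G₁ (n / 2)
  have hTV₂ : ∀ n, ¬ Even n → T n ⊆ f ⁻¹' V₂ := by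
    intro n hn
    rw [hT]; dsimp only; rw [if_neg hn, hG₂eq]
    exact subset_iUnion G₂ (n / 2)
  have hTcov : ∀ x ∈ S, ∃ n, x ∈ T n := by
    intro x hx
    rcases hS hx with h | h
    · rw [hG₁eq] at h
      obtain ⟨n, hn⟩ := mem_iUnion.mp h
      exact ⟨2 * n, by simp [hT, Nat.mul_div_cancel_left n two_pos, hn]⟩
    · rw [hG₂eq] at h
      obtain ⟨n, hn⟩ := mem_iUnion.mp h
      refine ⟨2 * n + 1, ?_⟩
      have he : ¬ Even (2 * n + 1) := by simp [Nat.even_add_one]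
      have hd : (2 * n + 1) / 2 = n := by omega
      simp [hT, if_neg he, hd, hn]
  -- R n : points appearing in T n for the first time
  set R : ℕ → Set X := fun n => T n \ ⋃ m ∈ Finset.range n, T m with hR
  have hRs : ∀ n, IsSigma03 (R n) := by
    intro n
    refine auxSigma03.inter (auxSigma03.of_isGδ (hTgd n)) (auxSigma03.compl_gdelta ?_)
    exact IsGδ.biUnion (Finset.range n).finite_toSet fun m _ => hTgd m
  have hRdisj : ∀ m n, m ≠ n → ∀ x, x ∈ R m → x ∈ R n → False := by
    intro m n hmn x hxm hxn
    rcases Nat.lt_or_ge m n with h | h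
    · exact hxn.2 (mem_biUnion (Finset.mem_range.mpr h) hxm.1)
    · exact hxm.2 (mem_biUnion (Finset.mem_range.mpr (Nat.lt_of_le_of_ne h fun e => hmn e.symm)) hxn.1)
  -- final codes
  set Bf : ℕ → Set X := fun i =>
    R (Nat.pairEquiv.symm i).1 ∩
      (if Even (Nat.pairEquiv.symm i).1 then B₁ (Nat.pairEquiv.symm i).2
        else B₂ (Nat.pairEquiv.symm i).2) with hBf
  have hsub₁ : ∀ n, Even n → ∀ x ∈ S, x ∈ R n → x ∈ S ∩ f ⁻¹' V₁ :=
    fun n hn x hx hr => ⟨hx, hTV₁ n hn hr.1⟩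
  have hsub₂ : ∀ n, ¬ Even n → ∀ x ∈ S, x ∈ R n → x ∈ S ∩ f ⁻¹' V₂ :=
    fun n hn x hx hr => ⟨hx, hTV₂ n hn hr.1⟩
  apply auxDecCont.ofCodes Bf
  · intro i
    rw [hBf]; dsimp only
    refine auxSigma03.inter (hRs _) ?_
    split <;> [exact hB₁ _; exact hB₂ _]
  · intro i j hij x hx hxi hxj
    rw [hBf] at hxi hxj; dsimp only at hxi hxj
    set p := Nat.pairEquiv.symm i with hp
    set q := Nat.pairEquiv.symm j with hq
    have hpq : p ≠ q := fun h => hij (Nat.pairEquiv.symm.injective (hp ▸ hq ▸ h))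
    by_cases hnn : p.1 = q.1
    · have hmm : p.2 ≠ q.2 := fun h => hpq (Prod.ext hnn h)
      by_cases he : Even p.1
      · rw [if_pos he] at hxi
        rw [if_pos (hnn ▸ he)] at hxj
        exact hd₁ p.2 q.2 hmm x (hsub₁ p.1 he x hx hxi.1) hxi.2 hxj.2
      · rw [if_neg he] at hxi
        rw [if_neg (hnn ▸ he)] at hxj
        exact hd₂ p.2 q.2 hmm x (hsub₂ p.1 he x hx hxi.1) hxi.2 hxj.2
    · exact hRdisj p.1 q.1 hnn x hxi.1 hxj.1
  · intro x hx
    have hex : ∃ n, x ∈ T n := hTcov x hx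
    classical
    set n := Nat.find hex with hn
    have hxT : x ∈ T n := Nat.find_spec hex
    have hxR : x ∈ R n := by
      refine ⟨hxT, fun hmem => ?_⟩
      obtain ⟨m, hm, hxm⟩ := mem_iUnion₂.mp hmem
      exact Nat.find_min hex (Finset.mem_range.mp hm) hxm
    by_cases he : Even n
    · obtain ⟨m, hm⟩ := mem_iUnion.mp (hc₁ (hsub₁ n he x hx hxR))
      refine mem_iUnion.mpr ⟨Nat.pairEquiv (n, m), ?_⟩
      rw [hBf]; dsimp only
      rw [Equiv.symm_apply_apply]
      exact ⟨hxR, by rw [if_pos he]; exact hm⟩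
    · obtain ⟨m, hm⟩ := mem_iUnion.mp (hc₂ (hsub₂ n he x hx hxR))
      refine mem_iUnion.mpr ⟨Nat.pairEquiv (n, m), ?_⟩
      rw [hBf]; dsimp only
      rw [Equiv.symm_apply_apply]
      exact ⟨hxR, by rw [if_neg he]; exact hm⟩
  · intro i
    rw [hBf]; dsimp only
    set p := Nat.pairEquiv.symm i with hp
    by_cases he : Even p.1
    · refine auxCont.mono ?_ (hk₁ p.2)
      rintro x ⟨hxS, hxR, hxB⟩
      exact ⟨hsub₁ p.1 he x hxS hxR, by rwa [if_pos he] at hxB⟩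
    · refine auxCont.mono ?_ (hk₂ p.2)
      rintro x ⟨hxS, hxR, hxB⟩
      exact ⟨hsub₂ p.1 he x hxS hxR, by rwa [if_neg he] at hxB⟩

end AuxGlue

section AuxSharp
variable {X Y : Type*} [TopologicalSpace X] [TopologicalSpace Y] {f : X → Y}

theorem auxSharpP0.mono {P0 : Set Y} {F0 U U' : Set X} (h : SharpP0 f P0 F0 U)
    (hsub : U' ⊆ U) (hne : (U' ∩ F0).Nonempty) : SharpP0 f P0 F0 U' :=
  ⟨hne, fun W hWo hWs hWne => h.2 W hWo (hWs.trans hsub) hWne⟩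

/-- Lemma B: splitting a sharp base pair along two disjoint relatively closed sets. -/
theorem auxSharpP0.split [PolishSpace X] (hf : Sigma3Measurable f)
    {P0 : Set Y} {F0 U : Set X} (hU : IsOpen U) (h : SharpP0 f P0 F0 U)
    {C₁ C₂ : Set Y} (hC₁ : C₁ ⊆ P0) (hC₂ : C₂ ⊆ P0) (hdisj : Disjoint C₁ C₂)
    (hcl₁ : IsClosed ((Subtype.val ⁻¹' C₁) : Set ↥P0))
    (hcl₂ : IsClosed ((Subtype.val ⁻¹' C₂) : Set ↥P0)) :
    ∃ U' : Set X, IsOpen U' ∧ U' ⊆ U ∧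
      (SharpP0 f (P0 \ C₁) F0 U' ∨ SharpP0 f (P0 \ C₂) F0 U') := by
  -- extract open sets V₁, V₂ with P0 \ Cᵢ = P0 ∩ Vᵢ
  rw [isClosed_induced_iff] at hcl₁ hcl₂
  obtain ⟨D₁, hD₁, hD₁eq⟩ := hcl₁
  obtain ⟨D₂, hD₂, hD₂eq⟩ := hcl₂
  have hV₁ : ∀ x ∈ P0, x ∈ C₁ ↔ x ∈ D₁ := by
    intro x hx
    have := Set.ext_iff.mp hD₁eq ⟨x, hx⟩
    simpa using this.symm
  have hV₂ : ∀ x ∈ P0, x ∈ C₂ ↔ x ∈ D₂ := by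
    intro x hx
    have := Set.ext_iff.mp hD₂eq ⟨x, hx⟩
    simpa using this.symm
  by_contra hcon
  push_neg at hcon
  have hcon' : ∀ U' : Set X, IsOpen U' → U' ⊆ U →
      ¬ SharpP0 f (P0 \ C₁) F0 U' ∧ ¬ SharpP0 f (P0 \ C₂) F0 U' := by
    intro U' hU'o hU's
    exact hcon U' hU'o hU's
  -- from non-sharpness get a decomposable piece
  have key : ∀ (Q : Set Y) (W : Set X), IsOpen W → W ⊆ U → (W ∩ F0).Nonempty →
      ¬ SharpP0 f Q F0 W →
      ∃ U₁ : Set X, IsOpen U₁ ∧ U₁ ⊆ W ∧ (U₁ ∩ F0).Nonempty ∧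
        DecCont ((f ⁻¹' Q ∩ F0 ∩ U₁).restrict f) := by
    intro Q W hWo hWs hWne hnot
    rw [SharpP0, not_and] at hnot
    have := hnot hWne
    push_neg at this
    obtain ⟨U₁, h1, h2, h3, h4⟩ := this
    exact ⟨U₁, h1, h2, h3, h4⟩
  obtain ⟨U₁, hU₁o, hU₁s, hU₁ne, hdec₁⟩ :=
    key (P0 \ C₁) U hU subset_rfl h.1 (hcon' U hU subset_rfl).1
  obtain ⟨U₂, hU₂o, hU₂s, hU₂ne, hdec₂⟩ :=
    key (P0 \ C₂) U₁ hU₁o (hU₁s.trans subset_rfl) hU₁ne (hcon' U₁ hU₁o hU₁s).2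
  -- restrict the first decomposition to U₂
  have hdec₁' : DecCont ((f ⁻¹' (P0 \ C₁) ∩ F0 ∩ U₂).restrict f) :=
    auxDecCont.mono (by exact inter_subset_inter_right _ hU₂s) hdec₁
  -- glue
  set S : Set X := f ⁻¹' P0 ∩ F0 ∩ U₂ with hSdef
  have hSV₁ : S ∩ f ⁻¹' D₁ᶜ = f ⁻¹' (P0 \ C₁) ∩ F0 ∩ U₂ := by
    ext x
    simp only [hSdef, mem_inter_iff, mem_preimage, mem_compl_iff, mem_diff]
    constructor
    · rintro ⟨⟨⟨hp, hf0⟩, hu⟩, hd⟩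
      exact ⟨⟨⟨hp, fun hc => hd ((hV₁ _ hp).mp hc)⟩, hf0⟩, hu⟩
    · rintro ⟨⟨⟨hp, hc⟩, hf0⟩, hu⟩
      exact ⟨⟨⟨hp, hf0⟩, hu⟩, fun hd => hc ((hV₁ _ hp).mpr hd)⟩
  have hSV₂ : S ∩ f ⁻¹' D₂ᶜ = f ⁻¹' (P0 \ C₂) ∩ F0 ∩ U₂ := by
    ext x
    simp only [hSdef, mem_inter_iff, mem_preimage, mem_compl_iff, mem_diff]
    constructor
    · rintro ⟨⟨⟨hp, hf0⟩, hu⟩, hd⟩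
      exact ⟨⟨⟨hp, fun hc => hd ((hV₂ _ hp).mp hc)⟩, hf0⟩, hu⟩
    · rintro ⟨⟨⟨hp, hc⟩, hf0⟩, hu⟩
      exact ⟨⟨⟨hp, hf0⟩, hu⟩, fun hd => hc ((hV₂ _ hp).mpr hd)⟩
  have hScov : S ⊆ f ⁻¹' D₁ᶜ ∪ f ⁻¹' D₂ᶜ := by
    rintro x ⟨⟨hp, _⟩, _⟩
    by_cases hc : f x ∈ C₁
    · exact Or.inr fun hd => (disjoint_left.mp hdisj hc) ((hV₂ _ hp).mpr hd)
    · exact Or.inl fun hd => hc ((hV₁ _ hp).mpr hd)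
  have hglue : DecCont (S.restrict f) := by
    refine auxDecCont.glue hf hD₁.isOpen_compl hD₂.isOpen_compl hScov ?_ ?_
    · rw [hSV₁]; exact hdec₁'
    · rw [hSV₂]; exact hdec₂
  exact h.2 U₂ hU₂o (hU₂s.trans hU₁s) hU₂ne hglue

theorem auxSharpP.congr {P P' : ℕ → Set Y} {F : ℕ → Set X} :
    ∀ (k : ℕ) (U : Set X), (∀ i ≤ k, P i = P' i) → SharpP f P F k U → SharpP f P' F k U := by
  intro k
  induction k with
  | zero =>
    intro U hag h
    have h0 : SharpP0 f (P 0) (F 0) U := h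
    show SharpP0 f (P' 0) (F 0) U
    rwa [← hag 0 le_rfl]
  | succ k ih =>
    intro U hag h
    obtain ⟨h0, h1⟩ := h
    refine ⟨by rwa [← hag (k+1) le_rfl], fun W hWo hWs hWne => ?_⟩
    obtain ⟨W'', o, s, hsh⟩ := h1 W hWo hWs hWne
    exact ⟨W'', o, s, ih W'' (fun i hi => hag i (hi.trans (Nat.le_succ k))) hsh⟩

/-- Lemma A: the main induction. -/
theorem auxSharpP.split [PolishSpace X] (hf : Sigma3Measurable f)
    {P : ℕ → Set Y} {F : ℕ → Set X} {j : ℕ} {C₁ C₂ : Set Y}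
    (hC₁ : C₁ ⊆ P j) (hC₂ : C₂ ⊆ P j) (hdisj : Disjoint C₁ C₂)
    (hcl₁ : IsClosed ((Subtype.val ⁻¹' C₁) : Set ↥(P j)))
    (hcl₂ : IsClosed ((Subtype.val ⁻¹' C₂) : Set ↥(P j))) :
    ∀ (k : ℕ) (U : Set X), IsOpen U → SharpP f P F k U → j ≤ k →
      ∃ U' : Set X, IsOpen U' ∧ U' ⊆ U ∧
        (SharpP f (Function.update P j (P j \ C₁)) F k U' ∨
         SharpP f (Function.update P j (P j \ C₂)) F k U') := by
  intro k
  induction k with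
  | zero =>
    intro U hU hs hj
    interval_cases j
    have h0 : SharpP0 f (P 0) (F 0) U := hs
    obtain ⟨U', hU'o, hU's, hor⟩ := auxSharpP0.split hf hU h0 hC₁ hC₂ hdisj hcl₁ hcl₂
    refine ⟨U', hU'o, hU's, hor.imp ?_ ?_⟩
    · intro hq
      show SharpP0 f (Function.update P 0 (P 0 \ C₁) 0) (F 0) U'
      rwa [Function.update_self]
    · intro hq
      show SharpP0 f (Function.update P 0 (P 0 \ C₂) 0) (F 0) U'
      rwa [Function.update_self]
  | succ k ih =>
    intro U hU hs hj
    obtain ⟨h0, h1⟩ := hs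
    rcases Nat.lt_or_ge j (k+1) with hjk | hjk
    · -- j ≤ k : the inductive case
      have hjk' : j ≤ k := Nat.lt_succ_iff.mp hjk
      have hQtop : ∀ C : Set Y, Function.update P j (P j \ C) (k+1) = P (k+1) :=
        fun C => Function.update_of_ne (by omega) _ _
      by_contra hcon
      push_neg at hcon
      have hcon' : ∀ U' : Set X, IsOpen U' → U' ⊆ U →
          ¬ SharpP f (Function.update P j (P j \ C₁)) F (k+1) U' ∧
          ¬ SharpP f (Function.update P j (P j \ C₂)) F (k+1) U' := by
        intro U' o s
        exact hcon U' o s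
      have claim : ∀ (Q : ℕ → Set Y), Q (k+1) = P (k+1) →
          (∀ V, IsOpen V → V ⊆ U → ¬ SharpP f Q F (k+1) V) →
          ∀ V, IsOpen V → V ⊆ U → (V ∩ F (k+1)).Nonempty →
            ∃ W, IsOpen W ∧ W ⊆ V ∧ (W ∩ F (k+1)).Nonempty ∧
              ∀ W', IsOpen W' → W' ⊆ W → ¬ SharpP f Q F k W' := by
        intro Q hQ hne V hVo hVU hVF
        have h0' : SharpP0 f (Q (k+1)) (F (k+1)) V := by
          rw [hQ]; exact auxSharpP0.mono h0 hVU hVF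
        have hb : ¬ ∀ W : Set X, IsOpen W → W ⊆ V → (W ∩ F (k+1)).Nonempty →
            ∃ W'' : Set X, IsOpen W'' ∧ W'' ⊆ W ∧ SharpP f Q F k W'' :=
          fun hb => hne V hVo hVU ⟨h0', hb⟩
        push_neg at hb
        obtain ⟨W, o, s, ne, hW⟩ := hb
        exact ⟨W, o, s, ne, fun W' o' s' hsh => hW W' o' s' hsh⟩
      obtain ⟨W₁, hW₁o, hW₁s, hW₁ne, hW₁⟩ :=
        claim _ (hQtop C₁) (fun V o s => (hcon' V o s).1) U hU subset_rfl h0.1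
      obtain ⟨W₂, hW₂o, hW₂s, hW₂ne, hW₂⟩ :=
        claim _ (hQtop C₂) (fun V o s => (hcon' V o s).2) W₁ hW₁o hW₁s hW₁ne
      obtain ⟨U'', hU''o, hU''s, hsh⟩ := h1 W₂ hW₂o ((hW₂s.trans hW₁s)) hW₂ne
      obtain ⟨V, hVo, hVs, hor⟩ := ih U'' hU''o hsh hjk'
      rcases hor with hq | hq
      · exact hW₁ V hVo (hVs.trans (hU''s.trans hW₂s)) hq
      · exact hW₂ V hVo (hVs.trans hU''s) hq
    · -- j = k+1 : use Lemma B at the top level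
      have hj' : j = k + 1 := le_antisymm hj hjk
      subst hj'
      obtain ⟨U', hU'o, hU's, hor⟩ := auxSharpP0.split hf hU h0 hC₁ hC₂ hdisj hcl₁ hcl₂
      refine ⟨U', hU'o, hU's, hor.imp ?_ ?_⟩
      · intro hq
        refine ⟨by rwa [Function.update_self], fun W hWo hWs hWne => ?_⟩
        obtain ⟨W'', o, s, hsh⟩ := h1 W hWo (hWs.trans hU's) hWne
        exact ⟨W'', o, s, auxSharpP.congr k W''
          (fun i hi => (Function.update_of_ne (by omega) _ _).symm) hsh⟩
      · intro hq
        refine ⟨by rwa [Function.update_self], fun W hWo hWs hWne => ?_⟩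
        obtain ⟨W'', o, s, hsh⟩ := h1 W hWo (hWs.trans hU's) hWne
        exact ⟨W'', o, s, auxSharpP.congr k W''
          (fun i hi => (Function.update_of_ne (by omega) _ _).symm) hsh⟩

end AuxSharp

/-- Lemma 4.5: at most one of the sets `C l` can destroy `𝓟`-sharpness. -/
theorem stmt15 {X Y : Type*} [TopologicalSpace X] [PolishSpace X]
    [TopologicalSpace Y] [TopologicalSpace.SeparableSpace Y]
    [TopologicalSpace.MetrizableSpace Y]
    (f : X → Y) (hf : Sigma3Measurable f)
    (k : ℕ) (F : ℕ → Set X) (hFcl : ∀ i ≤ k, IsClosed (F i))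
    (hFmono : ∀ i j, i ≤ j → j ≤ k → F j ⊆ F i)
    (P : ℕ → Set Y) (hPdisj : ∀ i j, i ≤ k → j ≤ k → i ≠ j → Disjoint (P i) (P j))
    (U : Set X) (hU : IsOpen U)
    (hsharp : SharpP f P F k U)
    (j : ℕ) (hj : j ≤ k)
    (m : ℕ) (C : Fin m → Set Y)
    (hCsub : ∀ l, C l ⊆ P j)
    (hCdisj : ∀ l₁ l₂, l₁ ≠ l₂ → Disjoint (C l₁) (C l₂))
    (hCcl : ∀ l, IsClosed ((Subtype.val ⁻¹' (C l)) : Set (P j))) :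
    {l : Fin m | ¬ ∃ U' : Set X, IsOpen U' ∧ U' ⊆ U ∧
      SharpP f (Function.update P j (P j \ C l)) F k U'}.Subsingleton := by
  intro l₁ hl₁ l₂ hl₂
  by_contra hne
  obtain ⟨U', hU'o, hU's, hor⟩ :=
    auxSharpP.split hf (hCsub l₁) (hCsub l₂) (hCdisj l₁ l₂ hne) (hCcl l₁) (hCcl l₂)
      k U hU hsharp hj
  rcases hor with hq | hq
  · exact hl₁ ⟨U', hU'o, hU's, hq⟩
  · exact hl₂ ⟨U', hU'o, hU's, hq⟩
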